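/- The optimal-profile constant κ_s := inf{ G₁[v, ℝ] : v measurable with G₁[v, ℝ] < ∞, v(x) → α' as x → −∞, and v(x) → β' as x → +∞ } is strictly positive. -/

import Mathlib

open Real MeasureTheory Set Filter
open scoped ENNReal

/-- The Gagliardo-type double integral ∬_{E×E} |v(x') − v(x)|²/|x' − x|^{1+2s} dx' dx. -/
noncomputable def gag (s : ℝ) (E : Set ℝ) (v : ℝ → ℝ) : ℝ≥0∞ :=
  ∫⁻ x in E, ∫⁻ x' in E, ENNReal.ofReal ((v x' - v x) ^ 2 / |x' - x| ^ (1 + 2 * s))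

/-- The functional G₁[v, ℝ] := (1/D) ∬ |v(x)−v(x')|²/|x−x'|^{1+2s} + ∫ V(v). -/
noncomputable def Gone (D s : ℝ) (V : ℝ → ℝ) (v : ℝ → ℝ) : ℝ≥0∞ :=
  ENNReal.ofReal (1 / D) * gag s univ v + ∫⁻ x, ENNReal.ofReal (V (v x))

/-- The optimal-profile constant
κ_s := inf { G₁[v, ℝ] : v measurable, G₁[v, ℝ] < ∞, v → α' at −∞, v → β' at +∞ }. -/
noncomputable def kappa (D s α' β' : ℝ) (V : ℝ → ℝ) : ℝ≥0∞ :=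
  sInf {t : ℝ≥0∞ | ∃ v : ℝ → ℝ, Measurable v ∧ Gone D s V v ≠ ⊤ ∧
    Tendsto v atBot (nhds α') ∧ Tendsto v atTop (nhds β') ∧ t = Gone D s V v}

/-- Measurability of the Gagliardo integrand in the second variable. -/
lemma gag_meas {s : ℝ} {v : ℝ → ℝ} (hv : Measurable v) (x : ℝ) :
    Measurable fun x' => ENNReal.ofReal ((v x' - v x) ^ 2 / |x' - x| ^ (1 + 2 * s)) := by
  exact (((hv.sub measurable_const).pow_const 2).div
    (((measurable_id.sub_const x).abs).pow_const _)).ennreal_ofReal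

/-- Measurability of the inner integral of `gag` as a function of the first variable. -/
lemma gag_inner_meas {s : ℝ} {v : ℝ → ℝ} (hv : Measurable v) :
    Measurable fun x => ∫⁻ x', ENNReal.ofReal ((v x' - v x) ^ 2 / |x' - x| ^ (1 + 2 * s)) := by
  apply Measurable.lintegral_prod_right (f := fun x x' =>
    ENNReal.ofReal ((v x' - v x) ^ 2 / |x' - x| ^ (1 + 2 * s)))
  exact (((hv.comp measurable_snd).sub (hv.comp measurable_fst)).pow_const 2).div
    (((measurable_snd.sub measurable_fst).abs).pow_const _) |>.ennreal_ofReal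

/-- Lower bound for `gag` from a transition within a window of length 4. -/
lemma gag_lb {s : ℝ} {v : ℝ → ℝ} (hv : Measurable v)
    {A B : Set ℝ} (hA : MeasurableSet A) {x0 δ : ℝ}
    (hAW : A ⊆ Set.Ioc x0 (x0 + 4)) (hBW : B ⊆ Set.Ioc x0 (x0 + 4))
    (hs0 : 0 ≤ s) (hs1 : s ≤ 1) (hδ : 0 < δ)
    (hgap : ∀ x ∈ A, ∀ x' ∈ B, 2 * δ ≤ v x' - v x ∧ x ≠ x') :
    ENNReal.ofReal (δ ^ 2 / 16) * volume B * volume A ≤ gag s Set.univ v := by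
  have hmain : ∀ x ∈ A, ENNReal.ofReal (δ ^ 2 / 16) * volume B
      ≤ ∫⁻ x', ENNReal.ofReal ((v x' - v x) ^ 2 / |x' - x| ^ (1 + 2 * s)) := by
    intro x hx
    calc ENNReal.ofReal (δ ^ 2 / 16) * volume B
        = ∫⁻ x' in B, ENNReal.ofReal (δ ^ 2 / 16) := (setLIntegral_const _ _).symm
      _ ≤ ∫⁻ x' in B, ENNReal.ofReal ((v x' - v x) ^ 2 / |x' - x| ^ (1 + 2 * s)) := by
          refine setLIntegral_mono (gag_meas hv x) ?_
          intro x' hx'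
          refine ENNReal.ofReal_le_ofReal ?_
          obtain ⟨hg, hne⟩ := hgap x hx x' hx'
          have h1 : 4 * δ ^ 2 ≤ (v x' - v x) ^ 2 := by nlinarith
          have hxx : |x' - x| ≤ 4 := by
            obtain ⟨ha1, ha2⟩ := hAW hx
            obtain ⟨hb1, hb2⟩ := hBW hx'
            rw [abs_le]; constructor <;> linarith
          have hxxpos : 0 < |x' - x| := abs_pos.mpr (sub_ne_zero.mpr hne.symm)
          have hp1 : |x' - x| ^ (1 + 2 * s) ≤ (4 : ℝ) ^ (1 + 2 * s) :=
            Real.rpow_le_rpow hxxpos.le hxx (by linarith)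
          have hp2 : (4 : ℝ) ^ (1 + 2 * s) ≤ (4 : ℝ) ^ (3 : ℝ) :=
            Real.rpow_le_rpow_of_exponent_le (by norm_num) (by linarith)
          have h43 : (4 : ℝ) ^ (3 : ℝ) = 64 := by
            rw [show (3 : ℝ) = ((3 : ℕ) : ℝ) by norm_num, Real.rpow_natCast]; norm_num
          have hppos : 0 < |x' - x| ^ (1 + 2 * s) := Real.rpow_pos_of_pos hxxpos _
          calc δ ^ 2 / 16 = (4 * δ ^ 2) / 64 := by ring
            _ ≤ (v x' - v x) ^ 2 / |x' - x| ^ (1 + 2 * s) :=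
                div_le_div₀ (by nlinarith) h1 hppos (by linarith)
      _ ≤ ∫⁻ x', ENNReal.ofReal ((v x' - v x) ^ 2 / |x' - x| ^ (1 + 2 * s)) :=
          setLIntegral_le_lintegral _ _
  calc ENNReal.ofReal (δ ^ 2 / 16) * volume B * volume A
      = ∫⁻ _ in A, ENNReal.ofReal (δ ^ 2 / 16) * volume B := (setLIntegral_const _ _).symm
    _ ≤ ∫⁻ x in A, ∫⁻ x', ENNReal.ofReal ((v x' - v x) ^ 2 / |x' - x| ^ (1 + 2 * s)) :=
        setLIntegral_mono (gag_inner_meas hv) hmain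
    _ ≤ ∫⁻ x, ∫⁻ x', ENNReal.ofReal ((v x' - v x) ^ 2 / |x' - x| ^ (1 + 2 * s)) :=
        setLIntegral_le_lintegral _ _
    _ = gag s Set.univ v := by simp [gag]

/-- The window-measure function is continuous. -/
lemma window_continuous {S : Set ℝ} (hS : MeasurableSet S) :
    Continuous fun x : ℝ => ∫ t in x..(x + 4), S.indicator (fun _ => (1 : ℝ)) t := by
  set g : ℝ → ℝ := S.indicator (fun _ => (1 : ℝ)) with hg
  have hm : Measurable g := measurable_const.indicator hS
  have hint : ∀ a b : ℝ, IntervalIntegrable g volume a b := by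
    intro a b
    rw [intervalIntegrable_iff]
    have hone : IntegrableOn (fun _ => (1 : ℝ)) (Set.uIoc a b) volume :=
      integrableOn_const measure_Ioc_lt_top.ne
    refine hone.mono' hm.aestronglyMeasurable (ae_of_all _ fun t => ?_)
    by_cases ht : t ∈ S <;>
      simp [hg, Set.indicator_of_mem, Set.indicator_of_notMem, ht]
  have h0 := intervalIntegral.continuous_primitive hint 0
  have heq : ∀ x : ℝ, ∫ t in x..(x + 4), g t
      = (∫ t in (0 : ℝ)..(x + 4), g t) - ∫ t in (0 : ℝ)..x, g t := by
    intro x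
    rw [← intervalIntegral.integral_add_adjacent_intervals (hint 0 x) (hint x (x + 4))]
    ring
  simp only [heq]
  exact (h0.comp (continuous_id.add continuous_const)).sub h0

/-- The window integral equals the measure of the intersection. -/
lemma window_eq {S : Set ℝ} (hS : MeasurableSet S) (x : ℝ) :
    ∫ t in x..(x + 4), S.indicator (fun _ => (1 : ℝ)) t
      = (volume (Set.Ioc x (x + 4) ∩ S)).toReal := by
  rw [intervalIntegral.integral_of_le (by linarith), setIntegral_indicator hS,
    setIntegral_const, smul_eq_mul, mul_one, measureReal_def]

/- STATEMENT 11: κ_s is strictly positive. -/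
theorem stmt_11 (a s D α' β' : ℝ) (V : ℝ → ℝ)
    (ha : a ∈ Set.Ioo (-1 : ℝ) 0) (hs : s = (1 - a) / 2) (hD : 0 < D) (hαβ : α' < β')
    (hV0 : ∀ t, 0 ≤ V t) (hVc : Continuous V)
    (hVz : ∀ t, V t = 0 ↔ t = α' ∨ t = β') :
    0 < kappa D s α' β' V := by
  obtain ⟨ha1, ha2⟩ := ha
  have hs0 : (0 : ℝ) ≤ s := by rw [hs]; linarith
  have hs1 : s ≤ 1 := by rw [hs]; linarith
  set δ := (β' - α') / 4 with hδdef
  have hδ : 0 < δ := by rw [hδdef]; linarith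
  have hβα : β' - α' = 4 * δ := by rw [hδdef]; ring
  have hord : α' + δ ≤ β' - δ := by rw [hδdef]; linarith
  obtain ⟨t0, ht0, ht0min⟩ :=
    isCompact_Icc.exists_isMinOn (Set.nonempty_Icc.mpr hord) hVc.continuousOn
  have hc : 0 < V t0 := by
    rcases (hV0 t0).lt_or_eq with h | h
    · exact h
    exfalso
    rcases (hVz t0).mp h.symm with h' | h'
    · have := ht0.1; rw [h'] at this; linarith
    · have := ht0.2; rw [h'] at this; linarith
  set ε := min (ENNReal.ofReal (V t0)) (ENNReal.ofReal (δ ^ 2 / (8 * D))) with hε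
  have hεpos : 0 < ε :=
    lt_min (ENNReal.ofReal_pos.mpr hc) (ENNReal.ofReal_pos.mpr (by positivity))
  refine hεpos.trans_le (le_sInf ?_)
  rintro t ⟨v, hv, -, hbot, htop, rfl⟩
  set low : Set ℝ := {x | v x < α' + δ} with hlowdef
  set high : Set ℝ := {x | β' - δ < v x} with hhighdef
  set mid : Set ℝ := {x | α' + δ ≤ v x ∧ v x ≤ β' - δ} with hmiddef
  have hlowm : MeasurableSet low := measurableSet_lt hv measurable_const
  have hhighm : MeasurableSet high := measurableSet_lt measurable_const hv
  have hmidm : MeasurableSet mid :=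
    (measurableSet_le measurable_const hv).inter (measurableSet_le hv measurable_const)
  rcases le_or_gt 1 (volume mid) with hmid | hmid
  · -- Potential energy dominates
    refine le_trans (min_le_left _ _) (le_trans ?_ le_add_self)
    calc ENNReal.ofReal (V t0) = ENNReal.ofReal (V t0) * 1 := (mul_one _).symm
      _ ≤ ENNReal.ofReal (V t0) * volume mid := by gcongr
      _ = ∫⁻ _ in mid, ENNReal.ofReal (V t0) := (setLIntegral_const _ _).symm
      _ ≤ ∫⁻ x in mid, ENNReal.ofReal (V (v x)) :=
          setLIntegral_mono ((hVc.measurable.comp hv)).ennreal_ofReal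
            (fun x hx => ENNReal.ofReal_le_ofReal (ht0min ⟨hx.1, hx.2⟩))
      _ ≤ ∫⁻ x, ENNReal.ofReal (V (v x)) := setLIntegral_le_lintegral _ _
  · -- Kinetic energy dominates
    obtain ⟨b, hb⟩ : ∃ b : ℝ, ∀ x ≤ b, v x < α' + δ := by
      have h1 : ∀ᶠ x in atBot, v x < α' + δ :=
        hbot.eventually_lt_const (by linarith : α' < α' + δ)
      exact Filter.eventually_atBot.mp h1
    obtain ⟨cb, hcb⟩ : ∃ cb : ℝ, ∀ x ≥ cb, β' - δ < v x := by
      have h1 : ∀ᶠ x in atTop, β' - δ < v x :=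
        htop.eventually_const_lt (by linarith : β' - δ < β')
      exact Filter.eventually_atTop.mp h1
    set c₂ := max cb b with hc₂
    have hbc : b - 4 ≤ c₂ := le_trans (by linarith) (le_max_right _ _)
    set g : ℝ → ℝ := high.indicator (fun _ => (1 : ℝ)) with hgdef
    set h : ℝ → ℝ := fun x => ∫ t in x..(x + 4), g t with hhdef
    have hcont : Continuous h := window_continuous hhighm
    have hwin : ∀ x : ℝ, h x = (volume (Set.Ioc x (x + 4) ∩ high)).toReal :=
      fun x => window_eq hhighm x
    have hhb : h (b - 4) = 0 := by
      rw [hwin]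
      have : Set.Ioc (b - 4) (b - 4 + 4) ∩ high = ∅ := by
        ext x
        simp only [Set.mem_inter_iff, Set.mem_Ioc, Set.mem_empty_iff_false, iff_false,
          hhighdef, Set.mem_setOf_eq, not_and]
        rintro ⟨hx1, hx2⟩
        have := hb x (by linarith)
        linarith
      rw [this]; simp
    have hhc : h c₂ = 4 := by
      rw [hwin]
      have : Set.Ioc c₂ (c₂ + 4) ∩ high = Set.Ioc c₂ (c₂ + 4) := by
        refine Set.inter_eq_self_of_subset_left ?_
        intro x hx
        exact hcb x (le_trans (le_max_left _ _) hx.1.le)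
      rw [this, Real.volume_Ioc]
      simp [ENNReal.toReal_ofReal]
    obtain ⟨x0, -, hx0⟩ : ∃ x0 ∈ Set.Icc (b - 4) c₂, h x0 = 2 := by
      have := intermediate_value_Icc hbc hcont.continuousOn
      rw [hhb, hhc] at this
      have h2 : (2 : ℝ) ∈ Set.Icc (0 : ℝ) 4 := by norm_num
      obtain ⟨x0, hx0mem, hx0⟩ := this h2
      exact ⟨x0, hx0mem, hx0⟩
    set W := Set.Ioc x0 (x0 + 4) with hW
    have hWvol : volume W = ENNReal.ofReal 4 := by rw [hW, Real.volume_Ioc]; norm_num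
    have hWfin : volume W ≠ ⊤ := by rw [hWvol]; exact ENNReal.ofReal_ne_top
    have hhighW : volume (W ∩ high) = 2 := by
      have hle : volume (W ∩ high) ≤ volume W := measure_mono Set.inter_subset_left
      have hfin : volume (W ∩ high) ≠ ⊤ := (lt_of_le_of_lt hle (lt_top_iff_ne_top.mpr hWfin)).ne
      have := hwin x0
      rw [hx0] at this
      have h2 : volume (W ∩ high) = ENNReal.ofReal 2 := by
        rw [← ENNReal.ofReal_toReal hfin, ← this]
      rw [h2]
      norm_num
    -- Partition of W
    have hcover : W = (W ∩ low) ∪ ((W ∩ mid) ∪ (W ∩ high)) := by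
      ext x
      simp only [Set.mem_union, Set.mem_inter_iff, hlowdef, hmiddef, hhighdef,
        Set.mem_setOf_eq]
      constructor
      · intro hx
        rcases lt_or_ge (v x) (α' + δ) with h1 | h1
        · exact Or.inl ⟨hx, h1⟩
        rcases le_or_gt (v x) (β' - δ) with h2 | h2
        · exact Or.inr (Or.inl ⟨hx, h1, h2⟩)
        · exact Or.inr (Or.inr ⟨hx, h2⟩)
      · rintro (⟨hx, -⟩ | ⟨hx, -⟩ | ⟨hx, -⟩) <;> exact hx
    have hd1 : Disjoint (W ∩ mid) (W ∩ high) := by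
      rw [Set.disjoint_left]
      rintro x ⟨-, hx2⟩ ⟨-, hx3⟩
      simp only [hmiddef, hhighdef, Set.mem_setOf_eq] at hx2 hx3
      linarith [hx2.2]
    have hd2 : Disjoint (W ∩ low) ((W ∩ mid) ∪ (W ∩ high)) := by
      rw [Set.disjoint_left]
      rintro x ⟨-, hx1⟩ hx2
      rcases hx2 with ⟨-, hx2⟩ | ⟨-, hx2⟩ <;>
        simp only [hlowdef, hmiddef, hhighdef, Set.mem_setOf_eq] at hx1 hx2 <;>
        [linarith [hx2.1]; linarith]
    have hWm : MeasurableSet W := measurableSet_Ioc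
    have hsum : volume (W ∩ low) + (volume (W ∩ mid) + volume (W ∩ high))
        = ENNReal.ofReal 4 := by
      rw [← measure_union hd1 (hWm.inter hhighm),
        ← measure_union hd2 ((hWm.inter hmidm).union (hWm.inter hhighm)),
        ← hcover, hWvol]
    have hmidW : volume (W ∩ mid) < 1 :=
      lt_of_le_of_lt (measure_mono Set.inter_subset_right) hmid
    have hlowW : (1 : ℝ≥0∞) ≤ volume (W ∩ low) := by
      by_contra hcon
      push_neg at hcon
      have h4 : (volume (W ∩ low) + volume (W ∩ mid)) + 2 = 2 + 2 := by
        rw [hhighW] at hsum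
        calc (volume (W ∩ low) + volume (W ∩ mid)) + 2
            = volume (W ∩ low) + (volume (W ∩ mid) + 2) := by rw [add_assoc]
          _ = ENNReal.ofReal 4 := hsum
          _ = 2 + 2 := by norm_num
      have h3 := WithTop.add_right_cancel (by norm_num : (2 : ℝ≥0∞) ≠ ⊤) h4
      have h5 : volume (W ∩ low) + volume (W ∩ mid) < 1 + 1 :=
        ENNReal.add_lt_add_of_lt_of_le (hmidW.trans_le le_top).ne hcon hmidW.le
      rw [h3] at h5
      norm_num at h5
    have hgap : ∀ x ∈ W ∩ low, ∀ x' ∈ W ∩ high, 2 * δ ≤ v x' - v x ∧ x ≠ x' := by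
      rintro x ⟨-, hx⟩ x' ⟨-, hx'⟩
      simp only [hlowdef, hhighdef, Set.mem_setOf_eq] at hx hx'
      refine ⟨by linarith, ?_⟩
      rintro rfl
      linarith
    have hkin := gag_lb hv (hWm.inter hlowm) Set.inter_subset_left
      Set.inter_subset_left hs0 hs1 hδ hgap
    refine le_trans (min_le_right _ _) (le_trans ?_ le_self_add)
    calc ENNReal.ofReal (δ ^ 2 / (8 * D))
        = ENNReal.ofReal (1 / D) * (ENNReal.ofReal (δ ^ 2 / 16) * 2 * 1) := by
          rw [mul_one, show (2 : ℝ≥0∞) = ENNReal.ofReal 2 from by norm_num,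
            ← ENNReal.ofReal_mul (by positivity), ← ENNReal.ofReal_mul (by positivity)]
          congr 1
          field_simp
          ring
      _ ≤ ENNReal.ofReal (1 / D) *
          (ENNReal.ofReal (δ ^ 2 / 16) * volume (W ∩ high) * volume (W ∩ low)) := by
          rw [hhighW]
          gcongr
      _ ≤ ENNReal.ofReal (1 / D) * gag s Set.univ v := mul_le_mul_right hkin _
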